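/- Let a,b be positive integers with a+b = d, and let w_{a,b} ∈ 𝔖_d be the permutation sending i to i+b for 1 ≤ i ≤ a and i to i-a for a < i ≤ d. If f ∈ k[y₁,…,y_d] is invariant under 𝔖_a × 𝔖_b (acting on the first a and last b variables), then D_{a,b}(f) := ∂_{w_{a,b}}(f) is invariant under all of 𝔖_d. -/

import Mathlib

open MvPolynomial Equiv

/-- Number of inversions of a permutation of `Fin d`; this is the Coxeter length. -/
def coxLen {d : ℕ} (σ : Equiv.Perm (Fin d)) : ℕ :=
  (Finset.univ.filter fun p : Fin d × Fin d => p.1 < p.2 ∧ σ p.2 < σ p.1).card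

/-- The block embedding `𝔖_a × 𝔖_b → 𝔖_{a+b}` (acting on the first `a` and last `b` letters). -/
def blockPerm {a b : ℕ} (σ : Equiv.Perm (Fin a)) (τ : Equiv.Perm (Fin b)) :
    Equiv.Perm (Fin (a + b)) :=
  (Equiv.permCongr finSumFinEquiv) (Equiv.sumCongr σ τ)

/-- The permutation `w_{a,b} ∈ 𝔖_{a+b}` sending `i ↦ i + b` for `i < a` and `i ↦ i - a`
for `a ≤ i < a+b` (0-based indexing). -/
def wSh (a b : ℕ) : Equiv.Perm (Fin (a + b)) :=
  (finAddFlip : Fin (a + b) ≃ Fin (b + a)).trans (finCongr (Nat.add_comm b a))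

lemma wSh_apply_lt {a b : ℕ} (x : Fin (a+b)) (h : (x:ℕ) < a) :
    ((wSh a b) x : ℕ) = x + b := by
  rcases x with ⟨x, hx⟩
  simp [wSh, finAddFlip_apply_mk_left h, Nat.add_comm]

lemma wSh_apply_ge {a b : ℕ} (x : Fin (a+b)) (h : a ≤ (x:ℕ)) :
    ((wSh a b) x : ℕ) = x - a := by
  rcases x with ⟨x, hx⟩
  simp [wSh, finAddFlip_apply_mk_right h hx]

lemma swapVal {d : ℕ} (c c' x : Fin d) :
    ((swap c c' x : Fin d) : ℕ) = if x = c then (c':ℕ) else if x = c' then (c:ℕ) else (x:ℕ) := by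
  rw [swap_apply_def]; split_ifs <;> rfl

lemma swap_lt_iff {d : ℕ} {c c' m n : Fin d} (hc : (c:ℕ)+1 = (c':ℕ))
    (hmn : m ≠ n) (h1 : ¬(m = c ∧ n = c')) (h2 : ¬(m = c' ∧ n = c)) :
    (swap c c' n < swap c c' m ↔ n < m) := by
  simp only [Fin.ext_iff, not_and] at hmn h1 h2
  rw [Fin.lt_def, Fin.lt_def, swapVal, swapVal]
  split_ifs with g1 g2 g3 g4 g5 g6 g7 g8 <;>
    simp only [Fin.ext_iff] at * <;> omega

lemma blockL {a b : ℕ} (i j : Fin a) :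
    blockPerm (Equiv.swap i j) (1 : Equiv.Perm (Fin b))
      = Equiv.swap (finSumFinEquiv (Sum.inl i)) (finSumFinEquiv (Sum.inl j)) := by
  rw [blockPerm, permCongr_def,
    show (1 : Equiv.Perm (Fin b)) = Equiv.refl (Fin b) from rfl,
    show Equiv.sumCongr (Equiv.swap i j) (Equiv.refl (Fin b)) = Equiv.swap (Sum.inl i) (Sum.inl j) from Equiv.Perm.sumCongr_swap_refl i j, symm_trans_swap_trans]

lemma blockR {a b : ℕ} (i j : Fin b) :
    blockPerm (1 : Equiv.Perm (Fin a)) (Equiv.swap i j)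
      = Equiv.swap (finSumFinEquiv (Sum.inr i)) (finSumFinEquiv (Sum.inr j)) := by
  rw [blockPerm, permCongr_def,
    show (1 : Equiv.Perm (Fin a)) = Equiv.refl (Fin a) from rfl,
    show Equiv.sumCongr (Equiv.refl (Fin a)) (Equiv.swap i j) = Equiv.swap (Sum.inr i) (Sum.inr j) from Equiv.Perm.sumCongr_refl_swap i j, symm_trans_swap_trans]

lemma coxLen_swap_mul {d : ℕ} (u : Equiv.Perm (Fin d)) (c c' p q : Fin d)
    (hc : (c:ℕ)+1 = (c':ℕ)) (hpq : p < q) (hp : u p = c) (hq : u q = c') :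
    coxLen (Equiv.swap c c' * u) = coxLen u + 1 := by
  classical
  have key : (Finset.univ.filter fun r : Fin d × Fin d =>
      r.1 < r.2 ∧ (Equiv.swap c c' * u) r.2 < (Equiv.swap c c' * u) r.1)
      = insert (p, q) (Finset.univ.filter fun r : Fin d × Fin d =>
      r.1 < r.2 ∧ u r.2 < u r.1) := by
    ext ⟨x, y⟩
    rw [Finset.mem_filter, Finset.mem_insert, Finset.mem_filter]
    simp only [Finset.mem_filter, Finset.mem_insert, Finset.mem_univ, true_and,
      Equiv.Perm.mul_apply, Prod.mk.injEq]
    constructor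
    · rintro ⟨hxy, hlt⟩
      by_cases hcase : x = p ∧ y = q
      · exact Or.inl hcase
      · right
        refine ⟨hxy, ?_⟩
        rw [← swap_lt_iff (m := u x) (n := u y) hc ?_ ?_ ?_]
        · exact hlt
        · exact fun h => (ne_of_lt hxy) (u.injective h)
        · rintro ⟨h1, h2⟩
          exact hcase ⟨u.injective (h1.trans hp.symm), u.injective (h2.trans hq.symm)⟩
        · rintro ⟨h1, h2⟩
          have hx : x = q := u.injective (h1.trans hq.symm)
          have hy : y = p := u.injective (h2.trans hp.symm)
          rw [hx, hy] at hxy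
          exact absurd hpq (not_lt_of_gt hxy)
    · rintro (⟨rfl, rfl⟩ | ⟨hxy, hlt⟩)
      · refine ⟨hpq, ?_⟩
        rw [hp, hq, swap_apply_left, swap_apply_right]
        exact Fin.lt_def.mpr (by omega)
      · refine ⟨hxy, ?_⟩
        rw [swap_lt_iff (m := u x) (n := u y) hc ?_ ?_ ?_]
        · exact hlt
        · exact fun h => (ne_of_lt hxy) (u.injective h)
        · rintro ⟨h1, h2⟩
          rw [h1, h2] at hlt
          exact absurd hlt (by rw [Fin.lt_def]; omega)
        · rintro ⟨h1, h2⟩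
          have hx : x = q := u.injective (h1.trans hq.symm)
          have hy : y = p := u.injective (h2.trans hp.symm)
          rw [hx, hy] at hxy
          exact absurd hpq (not_lt_of_gt hxy)
  have hnot : (p, q) ∉ (Finset.univ.filter fun r : Fin d × Fin d =>
      r.1 < r.2 ∧ u r.2 < u r.1) := by
    simp only [Finset.mem_filter, Finset.mem_univ, true_and, not_and]
    intro _
    rw [hp, hq]
    rw [Fin.lt_def]; omega
  rw [coxLen, key, Finset.card_insert_of_notMem hnot, coxLen, Nat.add_comm]

lemma coxLen_adj_swap {d : ℕ} (c c' : Fin d) (hc : (c:ℕ)+1 = (c':ℕ)) :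
    coxLen (Equiv.swap c c') = 1 := by
  classical
  have key : (Finset.univ.filter fun r : Fin d × Fin d =>
      r.1 < r.2 ∧ Equiv.swap c c' r.2 < Equiv.swap c c' r.1) = {(c, c')} := by
    ext ⟨x, y⟩
    simp only [Finset.mem_filter, Finset.mem_univ, true_and, Finset.mem_singleton,
      Prod.mk.injEq]
    constructor
    · rintro ⟨hxy, hlt⟩
      by_contra hne
      rw [swap_lt_iff (m := x) (n := y) hc (ne_of_lt hxy) ?_ ?_] at hlt
      · exact absurd hlt (not_lt_of_gt hxy)
      · exact fun h => hne h
      · rintro ⟨h1, h2⟩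
        rw [h1, h2] at hxy
        rw [Fin.lt_def] at hxy; omega
    · rintro ⟨rfl, rfl⟩
      refine ⟨Fin.lt_def.mpr (by omega), ?_⟩
      rw [swap_apply_left, swap_apply_right]
      exact Fin.lt_def.mpr (by omega)
  rw [coxLen, key, Finset.card_singleton]

lemma adj_gen {d : ℕ} (G : Submonoid (Equiv.Perm (Fin d)))
    (h : ∀ i j : Fin d, (i:ℕ)+1 = (j:ℕ) → Equiv.swap i j ∈ G)
    (ρ : Equiv.Perm (Fin d)) : ρ ∈ G := by
  cases d with
  | zero =>
    have : ρ = 1 := Equiv.ext fun x => x.elim0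
    rw [this]; exact G.one_mem
  | succ n =>
    have h2 : Submonoid.closure (Set.range fun i : Fin n =>
        Equiv.swap i.castSucc i.succ) ≤ G := by
      rw [Submonoid.closure_le]
      rintro _ ⟨i, rfl⟩
      exact h _ _ (by simp)
    exact h2 (by rw [Equiv.Perm.mclosure_swap_castSucc_succ]; trivial)


/-- Let `a, b` be positive integers with `a + b = d`, and `D` the family of
Demazure operators on `k[y₁,…,y_d]` (with `D w` given by composing along any reduced
expression of `w`). If `f` is invariant under the Young subgroup `𝔖_a × 𝔖_b`, then
`D_{a,b}(f) = ∂_{w_{a,b}}(f)` is invariant under all of `𝔖_d`. -/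
theorem demazure_shuffle_of_block_invariant_is_symmetric
    (k : Type*) [Field k] (a b : ℕ) (ha : 0 < a) (hb : 0 < b)
    (D : Equiv.Perm (Fin (a + b)) → Module.End k (MvPolynomial (Fin (a + b)) k))
    (hone : D 1 = 1)
    (hswap : ∀ i j : Fin (a + b), (i : ℕ) + 1 = (j : ℕ) → ∀ f,
      (X i - X j) * D (Equiv.swap i j) f = f - rename (Equiv.swap i j) f)
    (hmul : ∀ u v : Equiv.Perm (Fin (a + b)),
      coxLen (u * v) = coxLen u + coxLen v → D (u * v) = D u * D v)
    (f : MvPolynomial (Fin (a + b)) k)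
    (hf : ∀ (σ : Equiv.Perm (Fin a)) (τ : Equiv.Perm (Fin b)),
      rename (blockPerm σ τ) f = f) :
    ∀ ρ : Equiv.Perm (Fin (a + b)), rename ρ (D (wSh a b) f) = D (wSh a b) f := by
  classical
  have hXne : ∀ i j : Fin (a + b), (i:ℕ)+1 = (j:ℕ) →
      (X i - X j : MvPolynomial (Fin (a+b)) k) ≠ 0 := by
    intro i j hij h
    have h2 : (X i : MvPolynomial (Fin (a+b)) k) = X j := sub_eq_zero.mp h
    have h3 : i = j := MvPolynomial.X_injective h2
    rw [h3] at hij; omega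
  -- Key lemma A: D_s g is s-invariant
  have keyA : ∀ (i j : Fin (a + b)), (i:ℕ)+1 = (j:ℕ) →
      ∀ h : MvPolynomial (Fin (a+b)) k,
      rename (Equiv.swap i j) (D (Equiv.swap i j) h) = D (Equiv.swap i j) h := by
    intro i j hij h
    have h1 := hswap i j hij h
    have h2 := congrArg (rename (⇑(Equiv.swap i j))) h1
    rw [map_mul, map_sub, map_sub, rename_X, rename_X, swap_apply_left, swap_apply_right,
      rename_rename] at h2
    have hid : (⇑(Equiv.swap i j) ∘ ⇑(Equiv.swap i j)) = id := by
      funext x; simp [swap_apply_self]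
    rw [hid, rename_id, AlgHom.id_apply] at h2
    have h3 : (X i - X j) * rename (⇑(Equiv.swap i j)) (D (Equiv.swap i j) h)
        = (X i - X j) * (D (Equiv.swap i j) h) := by
      rw [h1]; linear_combination -h2
    exact mul_left_cancel₀ (hXne i j hij) h3
  -- Key lemma B: if g is s-invariant then D_s g = 0
  have keyB : ∀ (i j : Fin (a + b)), (i:ℕ)+1 = (j:ℕ) →
      ∀ h : MvPolynomial (Fin (a+b)) k,
      rename (Equiv.swap i j) h = h → D (Equiv.swap i j) h = 0 := by
    intro i j hij h hh
    have h1 := hswap i j hij h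
    rw [hh, sub_self] at h1
    rcases mul_eq_zero.mp h1 with h2 | h2
    · exact absurd h2 (hXne i j hij)
    · exact h2
  have inv_of_D : ∀ (i j : Fin (a + b)), (i:ℕ)+1 = (j:ℕ) →
      ∀ h : MvPolynomial (Fin (a+b)) k,
      D (Equiv.swap i j) h = 0 → rename (Equiv.swap i j) h = h := by
    intro i j hij h h0
    have h1 := hswap i j hij h
    rw [h0, mul_zero] at h1
    exact (sub_eq_zero.mp h1.symm).symm
  -- Main step: for every adjacent swap s, D_{wSh} f is s-invariant
  have main : ∀ i j : Fin (a + b), (i:ℕ)+1 = (j:ℕ) →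
      rename (Equiv.swap i j) (D (wSh a b) f) = D (wSh a b) f := by
    intro i j hij
    apply inv_of_D i j hij
    by_cases hcb : (i:ℕ) + 1 = b
    · -- descent case
      have hwz : wSh a b ⟨0, by omega⟩ = j := by
        apply Fin.ext
        rw [wSh_apply_lt _ (by simpa using ha)]
        simp; omega
      have hwl : wSh a b ⟨a + b - 1, by omega⟩ = i := by
        apply Fin.ext
        rw [wSh_apply_ge _ (by simp; omega)]
        simp; omega
      have hp : (Equiv.swap i j * wSh a b) ⟨0, by omega⟩ = i := by
        rw [Equiv.Perm.mul_apply, hwz, swap_apply_right]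
      have hq : (Equiv.swap i j * wSh a b) ⟨a + b - 1, by omega⟩ = j := by
        rw [Equiv.Perm.mul_apply, hwl, swap_apply_left]
      have hlen : coxLen (Equiv.swap i j * (Equiv.swap i j * wSh a b))
          = coxLen (Equiv.swap i j) + coxLen (Equiv.swap i j * wSh a b) := by
        rw [coxLen_swap_mul (Equiv.swap i j * wSh a b) i j ⟨0, by omega⟩ ⟨a + b - 1, by omega⟩ hij
          (Fin.lt_def.mpr (by simp; omega)) hp hq, coxLen_adj_swap i j hij, Nat.add_comm]
      have hsv : Equiv.swap i j * (Equiv.swap i j * wSh a b) = wSh a b := by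
        rw [← mul_assoc, Equiv.swap_mul_self, one_mul]
      have hD := hmul _ _ hlen
      rw [hsv] at hD
      rw [hD, Module.End.mul_apply]
      exact keyB i j hij _ (keyA i j hij _)
    · -- ascent case
      obtain ⟨p, q, hpq1, hpq, hwp, hwq, hren⟩ : ∃ p q : Fin (a + b),
          ((p:ℕ)+1 = (q:ℕ)) ∧ p < q ∧ wSh a b p = i ∧ wSh a b q = j ∧
          rename (Equiv.swap p q) f = f := by
        have hjlt : (j:ℕ) < a + b := j.isLt
        by_cases h2 : (i:ℕ) + 1 < b
        · refine ⟨⟨(i:ℕ)+a, by omega⟩, ⟨(i:ℕ)+a+1, by omega⟩, rfl,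
            Fin.lt_def.mpr (by simp), ?_, ?_, ?_⟩
          · apply Fin.ext; rw [wSh_apply_ge _ (by simp)]; simp
          · apply Fin.ext; rw [wSh_apply_ge _ (by simp; omega)]; simp; omega
          · have hbl : Equiv.swap (⟨(i:ℕ)+a, by omega⟩ : Fin (a+b)) ⟨(i:ℕ)+a+1, by omega⟩
                = blockPerm 1 (Equiv.swap ⟨(i:ℕ), by omega⟩ ⟨(i:ℕ)+1, by omega⟩) := by
              rw [blockR]
              congr 1 <;> (apply Fin.ext; simp [finSumFinEquiv_apply_right]; omega)
            rw [hbl]; exact hf 1 _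
        · have hbi : b ≤ (i:ℕ) := by omega
          refine ⟨⟨(i:ℕ)-b, by omega⟩, ⟨(i:ℕ)-b+1, by omega⟩, rfl,
            Fin.lt_def.mpr (by simp), ?_, ?_, ?_⟩
          · apply Fin.ext; rw [wSh_apply_lt _ (by simp; omega)]; simp; omega
          · apply Fin.ext; rw [wSh_apply_lt _ (by simp; omega)]; simp; omega
          · have hbl : Equiv.swap (⟨(i:ℕ)-b, by omega⟩ : Fin (a+b)) ⟨(i:ℕ)-b+1, by omega⟩
                = blockPerm (Equiv.swap ⟨(i:ℕ)-b, by omega⟩ ⟨(i:ℕ)-b+1, by omega⟩)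
                  (1 : Equiv.Perm (Fin b)) := by
              rw [blockL]
              congr 1 <;> (apply Fin.ext; simp [finSumFinEquiv_apply_left])
            rw [hbl]; exact hf _ 1
      have hconj : Equiv.swap i j * wSh a b = wSh a b * Equiv.swap p q := by
        have h3 : Equiv.swap i j = wSh a b * Equiv.swap p q * (wSh a b)⁻¹ := by
          rw [← hwp, ← hwq]; exact Equiv.swap_apply_apply _ _ _
        rw [h3, inv_mul_cancel_right]
      have hlen1 : coxLen (Equiv.swap i j * wSh a b)
          = coxLen (Equiv.swap i j) + coxLen (wSh a b) := by
        rw [coxLen_swap_mul (wSh a b) i j p q hij hpq hwp hwq, coxLen_adj_swap i j hij,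
          Nat.add_comm]
      have hlen2 : coxLen (wSh a b * Equiv.swap p q)
          = coxLen (wSh a b) + coxLen (Equiv.swap p q) := by
        rw [← hconj, coxLen_swap_mul (wSh a b) i j p q hij hpq hwp hwq,
          coxLen_adj_swap p q hpq1]
      have heq : D (Equiv.swap i j) (D (wSh a b) f)
          = D (wSh a b) (D (Equiv.swap p q) f) := by
        rw [← Module.End.mul_apply, ← Module.End.mul_apply, ← hmul _ _ hlen1,
          ← hmul _ _ hlen2, hconj]
      rw [heq, keyB p q hpq1 f hren, map_zero]
  -- conclude by generation
  let G : Submonoid (Equiv.Perm (Fin (a + b))) :=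
    { carrier := {ρ | rename (⇑ρ) (D (wSh a b) f) = D (wSh a b) f}
      mul_mem' := by
        intro ρ τ hρ hτ
        simp only [Set.mem_setOf_eq] at *
        have hc : ⇑(ρ * τ) = ⇑ρ ∘ ⇑τ := rfl
        rw [hc, ← rename_rename, hτ, hρ]
      one_mem' := by
        simp only [Set.mem_setOf_eq]
        have hc : ⇑(1 : Equiv.Perm (Fin (a + b))) = id := rfl
        rw [hc, rename_id, AlgHom.id_apply] }
  intro ρ
  exact adj_gen G (fun i j hij => main i j hij) ρ
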